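/- Let n, m ≥ 1, let C, A₁, …, A_m be real symmetric n×n matrices and let b ∈ ℝ^m. Suppose X_k is a real symmetric positive definite n×n matrix with Tr(A_i · X_k) = b_i for all i = 1, …, m, and suppose U is an n×n real matrix with X_k = Uᵀ U. Suppose further that X* is a real symmetric positive semidefinite n×n matrix with Tr(A_i · X*) = b_i for all i and Tr(C · X*) < Tr(C · X_k). Then there exist a real symmetric n×n matrix X̂ and a symmetric scaled diagonally dominant matrix Q such that X̂ = Uᵀ Q U, Tr(A_i · X̂) = b_i for all i, and Tr(C · X̂) < Tr(C · X_k). (In particular, the optimal value of iterate k+1 of the SOCP sequence strictly improves over Tr(C · X_k).) -/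

import Mathlib

open scoped Matrix

/-- A real matrix is diagonally dominant if `A i i ≥ ∑_{j ≠ i} |A i j|` for every `i`. -/
def IsDiagDom {n : ℕ} (A : Matrix (Fin n) (Fin n) ℝ) : Prop :=
  ∀ i, ∑ j ∈ Finset.univ.filter (fun j => j ≠ i), |A i j| ≤ A i i

/-- A real matrix is scaled diagonally dominant if there is a diagonal matrix `D` with
positive diagonal entries such that `D A D` is diagonally dominant. -/
def IsScaledDiagDom {n : ℕ} (A : Matrix (Fin n) (Fin n) ℝ) : Prop :=
  ∃ d : Fin n → ℝ, (∀ i, 0 < d i) ∧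
    IsDiagDom (Matrix.diagonal d * A * Matrix.diagonal d)

/-- Strict improvement of the SOCP iterates (Theorem 3.1 for the SDSOS/SOCP sequence):
if `X_k = Uᵀ U` is a symmetric positive definite feasible point and `X*` is a symmetric
psd feasible point with strictly smaller objective value, then there is a feasible point
`X̂ = Uᵀ Q U` with `Q` symmetric scaled diagonally dominant whose objective value is
strictly smaller than that of `X_k`. -/
theorem socp_strict_improvement {n m : ℕ} (hn : 1 ≤ n) (hm : 1 ≤ m)
    (C : Matrix (Fin n) (Fin n) ℝ) (hC : C.IsSymm)
    (A : Fin m → Matrix (Fin n) (Fin n) ℝ) (hA : ∀ i, (A i).IsSymm)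
    (b : Fin m → ℝ)
    (Xk : Matrix (Fin n) (Fin n) ℝ) (hXkSymm : Xk.IsSymm)
    (hXkPd : ∀ x : Fin n → ℝ, x ≠ 0 → 0 < dotProduct x (Xk.mulVec x))
    (hXkFeas : ∀ i, (A i * Xk).trace = b i)
    (U : Matrix (Fin n) (Fin n) ℝ) (hU : Xk = Uᵀ * U)
    (Xstar : Matrix (Fin n) (Fin n) ℝ) (hXsSymm : Xstar.IsSymm)
    (hXsPsd : ∀ x : Fin n → ℝ, 0 ≤ dotProduct x (Xstar.mulVec x))
    (hXsFeas : ∀ i, (A i * Xstar).trace = b i)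
    (hObj : (C * Xstar).trace < (C * Xk).trace) :
    ∃ (Xhat Q : Matrix (Fin n) (Fin n) ℝ),
      Xhat.IsSymm ∧ Q.IsSymm ∧ IsScaledDiagDom Q ∧
      Xhat = Uᵀ * Q * U ∧
      (∀ i, (A i * Xhat).trace = b i) ∧
      (C * Xhat).trace < (C * Xk).trace := by
  -- U is invertible
  have hdet : IsUnit U.det := by
    by_contra h
    obtain ⟨v, hv, hv0⟩ := (Matrix.exists_mulVec_eq_zero_iff).2 (by
      simpa [isUnit_iff_ne_zero] using h)
    have := hXkPd v hv
    rw [hU, ← Matrix.mulVec_mulVec, hv0] at this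
    simp at this
  have hVU : U⁻¹ * U = 1 := Matrix.nonsing_inv_mul U hdet
  set M : Matrix (Fin n) (Fin n) ℝ := (U⁻¹)ᵀ * Xstar * (U⁻¹) with hMdef
  -- Xstar is psd in mathlib's sense
  have hXsPsd' : Xstar.PosSemidef := by
    refine Matrix.PosSemidef.of_dotProduct_mulVec_nonneg ?_ ?_
    · rw [Matrix.IsHermitian]
      simpa using hXsSymm.eq
    · intro x
      simpa using hXsPsd x
  have hMpsd : M.PosSemidef := by
    have := hXsPsd'.conjTranspose_mul_mul_same (U⁻¹)
    simpa using this
  have hMsymm : M.IsSymm := by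
    have := hMpsd.isHermitian
    rw [Matrix.IsHermitian] at this
    simpa [Matrix.IsSymm] using this
  have hMdiag : ∀ i, 0 ≤ M i i := by
    intro i
    have := hMpsd.dotProduct_mulVec_nonneg (Pi.single i 1)
    simpa [Matrix.dotProduct_mulVec, single_dotProduct,
      dotProduct_single] using this
  set c : ℝ := ∑ i, ∑ j ∈ Finset.univ.filter (fun j => j ≠ i), |M i j| with hcdef
  have hc0 : 0 ≤ c :=
    Finset.sum_nonneg fun i _ => Finset.sum_nonneg fun j _ => abs_nonneg _
  have hrow : ∀ i, ∑ j ∈ Finset.univ.filter (fun j => j ≠ i), |M i j| ≤ c := by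
    intro i
    exact Finset.single_le_sum (f := fun i => ∑ j ∈ Finset.univ.filter (fun j => j ≠ i), |M i j|)
      (fun i _ => Finset.sum_nonneg fun j _ => abs_nonneg _) (Finset.mem_univ i)
  set t : ℝ := 1 / (1 + c) with htdef
  have h1c : (0:ℝ) < 1 + c := by linarith
  have ht0 : 0 < t := by positivity
  have htc : t * (1 + c) = 1 := by rw [htdef]; exact one_div_mul_cancel h1c.ne'
  have ht1 : t ≤ 1 := by nlinarith
  refine ⟨(1 - t) • Xk + t • Xstar, (1 - t) • (1 : Matrix (Fin n) (Fin n) ℝ) + t • M,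
    ?_, ?_, ?_, ?_, ?_, ?_⟩
  · rw [Matrix.IsSymm, Matrix.transpose_add, Matrix.transpose_smul, Matrix.transpose_smul,
      hXkSymm, hXsSymm]
  · rw [Matrix.IsSymm, Matrix.transpose_add, Matrix.transpose_smul, Matrix.transpose_smul,
      Matrix.transpose_one, hMsymm]
  · refine ⟨fun _ => 1, fun _ => one_pos, ?_⟩
    have hD : (Matrix.diagonal (fun _ : Fin n => (1:ℝ))) = 1 := by simp
    rw [hD, one_mul, mul_one]
    intro i
    have hQoff : ∀ j, j ≠ i → ((1 - t) • (1 : Matrix (Fin n) (Fin n) ℝ) + t • M) i j = t * M i j := by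
      intro j hj
      simp [Matrix.one_apply, hj.symm]
    have hQdiag : ((1 - t) • (1 : Matrix (Fin n) (Fin n) ℝ) + t • M) i i = (1 - t) + t * M i i := by
      simp [Matrix.one_apply]
    rw [hQdiag]
    calc ∑ j ∈ Finset.univ.filter (fun j => j ≠ i),
          |((1 - t) • (1 : Matrix (Fin n) (Fin n) ℝ) + t • M) i j|
        = ∑ j ∈ Finset.univ.filter (fun j => j ≠ i), t * |M i j| := by
          refine Finset.sum_congr rfl fun j hj => ?_
          rw [hQoff j (Finset.mem_filter.1 hj).2, abs_mul, abs_of_pos ht0]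
      _ = t * ∑ j ∈ Finset.univ.filter (fun j => j ≠ i), |M i j| := by
          rw [Finset.mul_sum]
      _ ≤ t * c := by
          exact mul_le_mul_of_nonneg_left (hrow i) ht0.le
      _ ≤ (1 - t) + t * M i i := by
          have : t * c = 1 - t := by nlinarith
          nlinarith [mul_nonneg ht0.le (hMdiag i)]
  · have hUV : Uᵀ * (U⁻¹)ᵀ = 1 := by
      rw [← Matrix.transpose_mul, hVU, Matrix.transpose_one]
    rw [Matrix.mul_add, Matrix.add_mul, Matrix.mul_smul, Matrix.mul_smul,
      Matrix.smul_mul, Matrix.smul_mul, Matrix.mul_one, ← hU, hMdef]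
    congr 1
    rw [← Matrix.mul_assoc, ← Matrix.mul_assoc, hUV, Matrix.one_mul,
      Matrix.mul_assoc, hVU, Matrix.mul_one]
  · intro i
    rw [Matrix.mul_add, Matrix.mul_smul, Matrix.mul_smul, Matrix.trace_add,
      Matrix.trace_smul, Matrix.trace_smul, hXkFeas, hXsFeas]
    simp; ring
  · rw [Matrix.mul_add, Matrix.mul_smul, Matrix.mul_smul, Matrix.trace_add,
      Matrix.trace_smul, Matrix.trace_smul]
    simp only [smul_eq_mul]
    nlinarith
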